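/- The group H with presentation ⟨ {x_m}_{m∈ℤ} ∪ {y_n}_{n∈ℤ} | y_n = x_{n+1}⁻¹ y_{n+1}⁻¹ x_{n+1} for all n ∈ ℤ ⟩ is locally free: every finitely generated subgroup of H is free. Moreover all generators x_m and y_n are nontrivial in H. -/

import Mathlib

/-- Relators `y_n⁻¹ x_{n+1}⁻¹ y_{n+1}⁻¹ x_{n+1}` for `n ∈ ℤ`, where `x_m` is
`Sum.inl m` and `y_n` is `Sum.inr n`. -/
def relsH : Set (FreeGroup (ℤ ⊕ ℤ)) :=
  {r | ∃ n : ℤ, r = (FreeGroup.of (Sum.inr n))⁻¹ * (FreeGroup.of (Sum.inl (n + 1)))⁻¹ *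
      (FreeGroup.of (Sum.inr (n + 1)))⁻¹ * FreeGroup.of (Sum.inl (n + 1))}

/-- The group `H = ⟨ x_m, y_n (m,n ∈ ℤ) ∣ y_n = x_{n+1}⁻¹ y_{n+1}⁻¹ x_{n+1} ⟩`. -/
def GroupH := PresentedGroup relsH

noncomputable instance : Group GroupH := by unfold GroupH; infer_instance

/-- The generator `x_m` of `H`. -/
noncomputable def xg (m : ℤ) : GroupH := PresentedGroup.of (Sum.inl m)

/-- The generator `y_n` of `H`. -/
noncomputable def yg (n : ℤ) : GroupH := PresentedGroup.of (Sum.inr n)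

namespace GroupHAux

/-- The target free group on generators `X m` (`m : ℤ`) and one extra generator `Y`. -/
abbrev F : Type := FreeGroup (ℤ ⊕ Unit)

def X (m : ℤ) : F := FreeGroup.of (Sum.inl m)

def Y : F := FreeGroup.of (Sum.inr ())

/-- `a k = w k` for `k ≥ 0`. -/
def a : ℕ → F
  | 0 => Y
  | k + 1 => X (k + 1) * (a k)⁻¹ * (X (k + 1))⁻¹

/-- `b k = w (-(k+1))`. -/
def b : ℕ → F
  | 0 => (X 0)⁻¹ * Y⁻¹ * X 0
  | k + 1 => (X (Int.negSucc k))⁻¹ * (b k)⁻¹ * X (Int.negSucc k)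

/-- The image of `y_n` in `F`. -/
def w : ℤ → F
  | .ofNat k => a k
  | .negSucc k => b k

lemma wrec (n : ℤ) : w n = (X (n + 1))⁻¹ * (w (n + 1))⁻¹ * X (n + 1) := by
  cases n with
  | ofNat k =>
    have h1 : (Int.ofNat k) + 1 = Int.ofNat (k + 1) := rfl
    rw [h1]
    show a k = (X (k + 1))⁻¹ * (a (k + 1))⁻¹ * X (k + 1)
    rw [a]
    group
  | negSucc k =>
    cases k with
    | zero =>
      have h1 : (Int.negSucc 0) + 1 = Int.ofNat 0 := by decide
      rw [h1]
      show b 0 = (X 0)⁻¹ * (a 0)⁻¹ * X 0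
      rw [b, a]
    | succ k =>
      have h1 : (Int.negSucc (k + 1)) + 1 = Int.negSucc k := rfl
      rw [h1]
      show b (k + 1) = (X (Int.negSucc k))⁻¹ * (b k)⁻¹ * X (Int.negSucc k)
      rw [b]

lemma relsH_lift (r : FreeGroup (ℤ ⊕ ℤ)) (hr : r ∈ relsH) :
    FreeGroup.lift (Sum.elim X w) r = 1 := by
  obtain ⟨n, rfl⟩ := hr
  simp only [map_mul, map_inv, FreeGroup.lift_apply_of, Sum.elim_inl, Sum.elim_inr]
  rw [show (w n)⁻¹ * (X (n + 1))⁻¹ * (w (n + 1))⁻¹ * X (n + 1)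
      = (w n)⁻¹ * ((X (n + 1))⁻¹ * (w (n + 1))⁻¹ * X (n + 1)) by group, ← wrec n]
  group

/-- The homomorphism `H → F`. -/
noncomputable def φ : GroupH →* F := PresentedGroup.toGroup relsH_lift

/-- The homomorphism `F → H`. -/
noncomputable def ψ : F →* GroupH := FreeGroup.lift (Sum.elim xg fun _ => yg 0)

lemma rel (n : ℤ) : yg n = (xg (n + 1))⁻¹ * (yg (n + 1))⁻¹ * xg (n + 1) := by
  have h : (PresentedGroup.mk relsH)
      ((FreeGroup.of (Sum.inr n))⁻¹ * (FreeGroup.of (Sum.inl (n + 1)))⁻¹ *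
      (FreeGroup.of (Sum.inr (n + 1)))⁻¹ * FreeGroup.of (Sum.inl (n + 1))) = 1 := by
    apply (QuotientGroup.eq_one_iff _).mpr
    exact Subgroup.subset_normalClosure ⟨n, rfl⟩
  simp only [map_mul, map_inv] at h
  have h2 : (yg n)⁻¹ * (xg (n + 1))⁻¹ * (yg (n + 1))⁻¹ * xg (n + 1) = 1 := h
  have := congrArg (fun z => yg n * z) h2
  simpa [mul_assoc] using this.symm

lemma rel' (n : ℤ) : yg (n + 1) = xg (n + 1) * (yg n)⁻¹ * (xg (n + 1))⁻¹ := by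
  rw [rel n]; group

lemma psi_a (k : ℕ) : ψ (a k) = yg k := by
  induction k with
  | zero =>
    simp [a, ψ, Y, yg]
    rfl
  | succ k ih =>
    rw [a]
    simp only [map_mul, map_inv, ψ, X, FreeGroup.lift_apply_of, Sum.elim_inl]
    rw [show ψ = FreeGroup.lift (Sum.elim xg fun _ => yg 0) from rfl] at ih
    rw [ih]
    have : ((k : ℤ) + 1) = ((k + 1 : ℕ) : ℤ) := by push_cast; ring
    rw [← this, rel' k]

lemma psi_b (k : ℕ) : ψ (b k) = yg (Int.negSucc k) := by
  induction k with
  | zero =>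
    rw [b]
    simp only [map_mul, map_inv, ψ, X, Y, FreeGroup.lift_apply_of, Sum.elim_inl, Sum.elim_inr]
    have h := rel (Int.negSucc 0)
    rw [show ((Int.negSucc 0) + 1 : ℤ) = 0 by decide] at h
    rw [h]
  | succ k ih =>
    rw [b]
    simp only [map_mul, map_inv]
    rw [show ψ (X (Int.negSucc k)) = xg (Int.negSucc k) by
      simp [ψ, X, FreeGroup.lift_apply_of]]
    rw [ih, rel (Int.negSucc (k + 1))]
    have hx : ((Int.negSucc (k + 1)) + 1 : ℤ) = Int.negSucc k := rfl
    rw [hx]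

lemma psi_w (n : ℤ) : ψ (w n) = yg n := by
  cases n with
  | ofNat k => exact psi_a k
  | negSucc k => exact psi_b k

lemma psi_phi : ψ.comp φ = MonoidHom.id GroupH := by
  apply PresentedGroup.ext
  intro x
  cases x with
  | inl m =>
    show ψ (φ (xg m)) = xg m
    rw [show φ (xg m) = X m from PresentedGroup.toGroup.of relsH_lift]
    simp [ψ, X, FreeGroup.lift_apply_of]
  | inr n =>
    show ψ (φ (yg n)) = yg n
    rw [show φ (yg n) = w n from PresentedGroup.toGroup.of relsH_lift]
    exact psi_w n

lemma phi_psi : φ.comp ψ = MonoidHom.id F := by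
  apply FreeGroup.ext_hom
  intro x
  cases x with
  | inl m =>
    simp only [MonoidHom.comp_apply, MonoidHom.id_apply]
    rw [show ψ (FreeGroup.of (Sum.inl m)) = xg m by simp [ψ, FreeGroup.lift_apply_of]]
    exact PresentedGroup.toGroup.of relsH_lift
  | inr u =>
    cases u
    simp only [MonoidHom.comp_apply, MonoidHom.id_apply]
    rw [show ψ (FreeGroup.of (Sum.inr ())) = yg 0 by simp [ψ, FreeGroup.lift_apply_of]]
    exact PresentedGroup.toGroup.of relsH_lift

/-- `H` is isomorphic to the free group `F`. -/
noncomputable def e : GroupH ≃* F := MonoidHom.toMulEquiv φ ψ psi_phi phi_psi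

lemma e_apply (g : GroupH) : e g = φ g := rfl

lemma a_ne_one (k : ℕ) : a k ≠ 1 := by
  induction k with
  | zero => exact FreeGroup.of_ne_one _
  | succ k ih =>
    rw [a]
    intro h
    apply ih
    have := congrArg (fun z => (X (k + 1))⁻¹ * z * X (k + 1)) h
    simp only [mul_assoc] at this
    simpa [← mul_assoc] using this

lemma b_ne_one (k : ℕ) : b k ≠ 1 := by
  induction k with
  | zero =>
    rw [b]
    intro h
    apply FreeGroup.of_ne_one (Sum.inr () : ℤ ⊕ Unit)
    have := congrArg (fun z => X 0 * z * (X 0)⁻¹) h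
    simp only [mul_assoc] at this
    have hY : (Y : F)⁻¹ = 1 := by simpa [← mul_assoc] using this
    rw [inv_eq_one] at hY
    exact hY
  | succ k ih =>
    rw [b]
    intro h
    apply ih
    have := congrArg (fun z => X (Int.negSucc k) * z * (X (Int.negSucc k))⁻¹) h
    simp only [mul_assoc] at this
    have : (b k)⁻¹ = 1 := by simpa [← mul_assoc] using this
    rwa [inv_eq_one] at this

lemma w_ne_one (n : ℤ) : w n ≠ 1 := by
  cases n with
  | ofNat k => exact a_ne_one k
  | negSucc k => exact b_ne_one k

noncomputable instance : IsFreeGroup GroupH := IsFreeGroup.ofMulEquiv e.symm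

end GroupHAux

/-- The group `H` is locally free (every finitely generated subgroup is free),
and all the generators `x_m`, `y_n` are nontrivial in `H`. -/
theorem groupH_locallyFree :
    (∀ K : Subgroup GroupH, K.FG → ∃ X : Type, Nonempty (K ≃* FreeGroup X)) ∧
    (∀ m : ℤ, xg m ≠ 1) ∧ (∀ n : ℤ, yg n ≠ 1) := by
  refine ⟨fun K _ => ⟨IsFreeGroup.Generators K, ⟨IsFreeGroup.toFreeGroup K⟩⟩, ?_, ?_⟩
  · intro m h
    have : GroupHAux.e (xg m) = 1 := by rw [h, map_one]
    rw [GroupHAux.e_apply, show GroupHAux.φ (xg m) = GroupHAux.X m from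
      PresentedGroup.toGroup.of GroupHAux.relsH_lift] at this
    exact FreeGroup.of_ne_one _ this
  · intro n h
    have : GroupHAux.e (yg n) = 1 := by rw [h, map_one]
    rw [GroupHAux.e_apply, show GroupHAux.φ (yg n) = GroupHAux.w n from
      PresentedGroup.toGroup.of GroupHAux.relsH_lift] at this
    exact GroupHAux.w_ne_one n this
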